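/- Let 𝓛 be a summable symmetric monoidal category (a symmetric monoidal category with zero morphisms satisfying 0⊗f = f⊗0 = 0, equipped with a summability structure satisfying (S-⊗)). If (f_i ∈ 𝓛(X,Y))_{i∈I} and (g_j ∈ 𝓛(U,V))_{j∈J} are finite summable families, then the family (f_i⊗g_j ∈ 𝓛(X⊗U, Y⊗V))_{(i,j)∈I×J} is summable and (∑_{i∈I} f_i) ⊗ (∑_{j∈J} g_j) = ∑_{(i,j)∈I×J} f_i⊗g_j. -/

import Mathlib

open CategoryTheory Limits MonoidalCategory

universe v u

/-- A pre-summability structure on a category with zero morphisms: a functor `S`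
together with jointly monic natural transformations `π₀, π₁ : S ⟶ 𝟭 C` and a
natural transformation `σ : S ⟶ 𝟭 C`. -/
structure PreSummability (C : Type u) [Category.{v} C] [HasZeroMorphisms C] where
  S : C ⥤ C
  π0 : S ⟶ 𝟭 C
  π1 : S ⟶ 𝟭 C
  σ : S ⟶ 𝟭 C
  jointly_monic : ∀ {Y X : C} (f g : Y ⟶ S.obj X),
    f ≫ π0.app X = g ≫ π0.app X → f ≫ π1.app X = g ≫ π1.app X → f = g

namespace PreSummability

variable {C : Type u} [Category.{v} C] [HasZeroMorphisms C] (P : PreSummability C)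

/-- Two morphisms are summable when they admit a (necessarily unique) witness. -/
def Summable {Y X : C} (f₀ f₁ : Y ⟶ X) : Prop :=
  ∃ h : Y ⟶ P.S.obj X, h ≫ P.π0.app X = f₀ ∧ h ≫ P.π1.app X = f₁

/-- The witness `⟨f₀, f₁⟩` of a summable pair (an arbitrary value if the pair is
not summable). -/
noncomputable def witness {Y X : C} (f₀ f₁ : Y ⟶ X) : Y ⟶ P.S.obj X :=
  @dite _ (P.Summable f₀ f₁) (Classical.propDecidable _) (fun h => h.choose) (fun _ => 0)

/-- The sum `f₀ + f₁ = σ ∘ ⟨f₀, f₁⟩` of a summable pair. -/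
noncomputable def sum {Y X : C} (f₀ f₁ : Y ⟶ X) : Y ⟶ X :=
  P.witness f₀ f₁ ≫ P.σ.app X

/-- Projections indexed by a boolean. -/
def pr (i : Bool) : P.S ⟶ 𝟭 C := if i then P.π1 else P.π0

/-- Axiom (S-com): `π₁` and `π₀` are summable with `π₁ + π₀ = σ`. -/
def SCom : Prop := ∀ X : C,
  P.Summable (P.π1.app X) (P.π0.app X) ∧ P.sum (P.π1.app X) (P.π0.app X) = P.σ.app X

/-- Axiom (S-zero): `0` and `id` are summable with `0 + id = id`. -/
def SZero : Prop := ∀ X : C,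
  P.Summable (0 : X ⟶ X) (𝟙 X) ∧ P.sum (0 : X ⟶ X) (𝟙 X) = 𝟙 X

/-- Axiom (S-wit): if `σ∘f₀` and `σ∘f₁` are summable then `f₀` and `f₁` are summable. -/
def SWit : Prop := ∀ (X Y : C) (f₀ f₁ : X ⟶ P.S.obj Y),
  P.Summable (f₀ ≫ P.σ.app Y) (f₁ ≫ P.σ.app Y) → P.Summable f₀ f₁

end PreSummability

section Monoidal

variable {C : Type u} [Category.{v} C] [HasZeroMorphisms C] [MonoidalCategory C]

/-- The tensor product of zero morphisms is zero. -/
def TensorZero (C : Type u) [Category.{v} C] [HasZeroMorphisms C]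
    [MonoidalCategory C] : Prop :=
  ∀ {X Y U V : C} (f : U ⟶ V),
    ((0 : X ⟶ Y) ⊗ₘ f) = 0 ∧ (f ⊗ₘ (0 : X ⟶ Y)) = 0

/-- Axiom (S-⊗): if `f₀` and `f₁` are summable then so are `f₀ ⊗ g` and `f₁ ⊗ g`,
with `(f₀ + f₁) ⊗ g = f₀ ⊗ g + f₁ ⊗ g`. -/
def PreSummability.STens (P : PreSummability C) : Prop :=
  ∀ {X Y U V : C} (f₀ f₁ : X ⟶ Y) (g : U ⟶ V), P.Summable f₀ f₁ →
    P.Summable (f₀ ⊗ₘ g) (f₁ ⊗ₘ g) ∧ (P.sum f₀ f₁ ⊗ₘ g) = P.sum (f₀ ⊗ₘ g) (f₁ ⊗ₘ g)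

end Monoidal

namespace PreSummability

variable {C : Type u} [Category.{v} C] [HasZeroMorphisms C]

/-- The partial addition on a hom-set induced by the summability structure. -/
noncomputable def addOpt (P : PreSummability C) {X Y : C} (f g : X ⟶ Y) :
    Option (X ⟶ Y) :=
  @dite _ (P.Summable f g) (Classical.propDecidable _) (fun _ => some (P.sum f g))
    (fun _ => none)

/-- The (partial) sum of a finite sequence of morphisms, in the partial
commutative monoid structure of the hom-set. -/
noncomputable def sumListHom (P : PreSummability C) {X Y : C}
    (l : List (X ⟶ Y)) : Option (X ⟶ Y) :=
  l.foldl (fun acc a => acc.bind fun s => P.addOpt s a) (some 0)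

end PreSummability

open PreSummability
namespace PreSummability

variable {C : Type u} [Category.{v} C] [HasZeroMorphisms C] (P : PreSummability C)

lemma witness_spec {Y X : C} {f₀ f₁ : Y ⟶ X} (h : P.Summable f₀ f₁) :
    P.witness f₀ f₁ ≫ P.π0.app X = f₀ ∧ P.witness f₀ f₁ ≫ P.π1.app X = f₁ := by
  rw [witness, dif_pos h]
  exact h.choose_spec

lemma witness_eq {Y X : C} {f₀ f₁ : Y ⟶ X} (w : Y ⟶ P.S.obj X)
    (h0 : w ≫ P.π0.app X = f₀) (h1 : w ≫ P.π1.app X = f₁) :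
    P.witness f₀ f₁ = w := by
  have hs : P.Summable f₀ f₁ := ⟨w, h0, h1⟩
  exact P.jointly_monic _ _ (by rw [(P.witness_spec hs).1, h0]) (by rw [(P.witness_spec hs).2, h1])

lemma sum_eq_of_witness {Y X : C} {f₀ f₁ : Y ⟶ X} (w : Y ⟶ P.S.obj X)
    (h0 : w ≫ P.π0.app X = f₀) (h1 : w ≫ P.π1.app X = f₁) :
    P.sum f₀ f₁ = w ≫ P.σ.app X := by
  rw [sum, P.witness_eq w h0 h1]

lemma summable_precomp {Z Y X : C} (e : Z ⟶ Y) {f₀ f₁ : Y ⟶ X} (h : P.Summable f₀ f₁) :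
    P.Summable (e ≫ f₀) (e ≫ f₁) ∧ P.sum (e ≫ f₀) (e ≫ f₁) = e ≫ P.sum f₀ f₁ := by
  obtain ⟨w, h0, h1⟩ := h
  refine ⟨⟨e ≫ w, by rw [Category.assoc, h0], by rw [Category.assoc, h1]⟩, ?_⟩
  rw [P.sum_eq_of_witness (e ≫ w) (by rw [Category.assoc, h0]) (by rw [Category.assoc, h1]),
    P.sum_eq_of_witness w h0 h1, Category.assoc]

lemma summable_postcomp {Y X Z : C} (k : X ⟶ Z) {f₀ f₁ : Y ⟶ X} (h : P.Summable f₀ f₁) :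
    P.Summable (f₀ ≫ k) (f₁ ≫ k) ∧ P.sum (f₀ ≫ k) (f₁ ≫ k) = P.sum f₀ f₁ ≫ k := by
  obtain ⟨w, h0, h1⟩ := h
  have n0 : P.S.map k ≫ P.π0.app Z = P.π0.app X ≫ k := by simpa using P.π0.naturality k
  have n1 : P.S.map k ≫ P.π1.app Z = P.π1.app X ≫ k := by simpa using P.π1.naturality k
  have ns : P.S.map k ≫ P.σ.app Z = P.σ.app X ≫ k := by simpa using P.σ.naturality k
  have c0 : (w ≫ P.S.map k) ≫ P.π0.app Z = f₀ ≫ k := by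
    rw [Category.assoc, n0, ← Category.assoc, h0]
  have c1 : (w ≫ P.S.map k) ≫ P.π1.app Z = f₁ ≫ k := by
    rw [Category.assoc, n1, ← Category.assoc, h1]
  refine ⟨⟨w ≫ P.S.map k, c0, c1⟩, ?_⟩
  rw [P.sum_eq_of_witness (w ≫ P.S.map k) c0 c1, P.sum_eq_of_witness w h0 h1,
    Category.assoc, ns, ← Category.assoc]

lemma summable_zero_left (hzero : P.SZero) {Y X : C} (f : Y ⟶ X) :
    P.Summable 0 f ∧ P.sum 0 f = f := by
  have h := P.summable_precomp f (hzero X).1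
  rw [comp_zero, Category.comp_id, (hzero X).2, Category.comp_id] at h
  exact h

lemma summable_comm (hcom : P.SCom) {Y X : C} {f₀ f₁ : Y ⟶ X} (h : P.Summable f₀ f₁) :
    P.Summable f₁ f₀ ∧ P.sum f₁ f₀ = P.sum f₀ f₁ := by
  obtain ⟨w, h0, h1⟩ := h
  have hc := P.witness_spec (hcom X).1
  have hcs : P.witness (P.π1.app X) (P.π0.app X) ≫ P.σ.app X = P.σ.app X := (hcom X).2
  simp only [Functor.id_obj] at hc hcs
  have c0 : (w ≫ P.witness (P.π1.app X) (P.π0.app X)) ≫ P.π0.app X = f₁ := by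
    rw [Category.assoc, hc.1, h1]
  have c1 : (w ≫ P.witness (P.π1.app X) (P.π0.app X)) ≫ P.π1.app X = f₀ := by
    rw [Category.assoc, hc.2, h0]
  refine ⟨⟨_, c0, c1⟩, ?_⟩
  rw [P.sum_eq_of_witness _ c0 c1, P.sum_eq_of_witness w h0 h1]
  simp only [Functor.id_obj, Category.assoc, hcs]

lemma summable_zero_right (hzero : P.SZero) (hcom : P.SCom) {Y X : C} (f : Y ⟶ X) :
    P.Summable f 0 ∧ P.sum f 0 = f := by
  have h := P.summable_comm hcom (P.summable_zero_left hzero f).1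
  rw [(P.summable_zero_left hzero f).2] at h
  exact h

end PreSummability
namespace PreSummability

variable {C : Type u} [Category.{v} C] [HasZeroMorphisms C] (P : PreSummability C)

lemma assoc1 (hzero : P.SZero) (hcom : P.SCom) (hwit : P.SWit)
    {X Y : C} {f₀ f₁ f₂ : X ⟶ Y} (h01 : P.Summable f₀ f₁)
    (h2 : P.Summable (P.sum f₀ f₁) f₂) :
    P.Summable f₁ f₂ ∧ P.Summable f₀ (P.sum f₁ f₂) ∧
      P.sum (P.sum f₀ f₁) f₂ = P.sum f₀ (P.sum f₁ f₂) := by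
  -- A and B
  set A : X ⟶ P.S.obj Y := P.witness f₀ f₁ with hA
  have hA0 : A ≫ P.π0.app Y = f₀ := (P.witness_spec h01).1
  have hA1 : A ≫ P.π1.app Y = f₁ := (P.witness_spec h01).2
  have hAσ : A ≫ P.σ.app Y = P.sum f₀ f₁ := rfl
  set B : X ⟶ P.S.obj Y := f₂ ≫ P.witness (0 : Y ⟶ Y) (𝟙 Y) with hB
  have hz := P.witness_spec (hzero Y).1
  have hB0 : B ≫ P.π0.app Y = 0 := by rw [hB, Category.assoc, hz.1, comp_zero]
  have hB1 : B ≫ P.π1.app Y = f₂ := by rw [hB, Category.assoc, hz.2, Category.comp_id]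
  have hBσ : B ≫ P.σ.app Y = f₂ := by
    have h := (hzero Y).2
    rw [sum] at h
    rw [hB, Category.assoc, h, Category.comp_id]
  -- W : witness of (A, B)
  have hsAB : P.Summable (A ≫ P.σ.app Y) (B ≫ P.σ.app Y) := by
    rw [hAσ, hBσ]; exact h2
  obtain ⟨W, hW0, hW1⟩ := hwit X Y A B hsAB
  -- naturality helpers
  have n0 : ∀ (φ : P.S.obj Y ⟶ Y), P.S.map φ ≫ P.π0.app Y = P.π0.app (P.S.obj Y) ≫ φ :=
    fun φ => by simpa using P.π0.naturality φ
  have n1 : ∀ (φ : P.S.obj Y ⟶ Y), P.S.map φ ≫ P.π1.app Y = P.π1.app (P.S.obj Y) ≫ φ :=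
    fun φ => by simpa using P.π1.naturality φ
  have ns : ∀ (φ : P.S.obj Y ⟶ Y), P.S.map φ ≫ P.σ.app Y = P.σ.app (P.S.obj Y) ≫ φ :=
    fun φ => by simpa using P.σ.naturality φ
  -- components of W ≫ S.map φ
  have comp : ∀ (φ : P.S.obj Y ⟶ Y),
      (W ≫ P.S.map φ) ≫ P.π0.app Y = A ≫ φ ∧ (W ≫ P.S.map φ) ≫ P.π1.app Y = B ≫ φ := by
    intro φ
    constructor
    · rw [Category.assoc, n0 φ, ← Category.assoc, hW0]
    · rw [Category.assoc, n1 φ, ← Category.assoc, hW1]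
  -- f₁, f₂ summable
  have c1 := comp (P.π1.app Y)
  rw [hA1] at c1; rw [hB1] at c1
  have s12 : P.Summable f₁ f₂ := ⟨_, c1.1, c1.2⟩
  have e12 : P.sum f₁ f₂ = (W ≫ P.σ.app (P.S.obj Y)) ≫ P.π1.app Y := by
    rw [P.sum_eq_of_witness _ c1.1 c1.2]
    simp only [Category.assoc, ns (P.π1.app Y)]
  -- f₀ = W ≫ σ_{S Y} ≫ π0
  have c0 := comp (P.π0.app Y)
  rw [hA0] at c0; rw [hB0] at c0
  have v0 : (W ≫ P.σ.app (P.S.obj Y)) ≫ P.π0.app Y = f₀ := by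
    have h := P.sum_eq_of_witness _ c0.1 c0.2
    rw [(P.summable_zero_right hzero hcom f₀).2] at h
    rw [h]
    simp only [Category.assoc, ns (P.π0.app Y)]
  have v1 : (W ≫ P.σ.app (P.S.obj Y)) ≫ P.π1.app Y = P.sum f₁ f₂ := e12.symm
  have s0 : P.Summable f₀ (P.sum f₁ f₂) := ⟨_, v0, v1⟩
  refine ⟨s12, s0, ?_⟩
  have cσ := comp (P.σ.app Y)
  rw [hAσ] at cσ; rw [hBσ] at cσ
  rw [P.sum_eq_of_witness _ cσ.1 cσ.2, P.sum_eq_of_witness _ v0 v1]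
  simp only [Category.assoc, ns (P.σ.app Y)]

end PreSummability
namespace PreSummability

variable {C : Type u} [Category.{v} C] [HasZeroMorphisms C] (P : PreSummability C)

lemma assoc2 (hzero : P.SZero) (hcom : P.SCom) (hwit : P.SWit)
    {X Y : C} {f₀ f₁ f₂ : X ⟶ Y} (h12 : P.Summable f₁ f₂)
    (h0 : P.Summable f₀ (P.sum f₁ f₂)) :
    P.Summable f₀ f₁ ∧ P.Summable (P.sum f₀ f₁) f₂ ∧
      P.sum (P.sum f₀ f₁) f₂ = P.sum f₀ (P.sum f₁ f₂) := by
  obtain ⟨h0', e0'⟩ := P.summable_comm hcom h0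
  -- h0' : Summable (f₁+f₂) f₀
  have step1 := P.assoc1 hzero hcom hwit h12 h0'
  -- Summable f₂ f₀, Summable f₁ (f₂+f₀), (f₁+f₂)+f₀ = f₁+(f₂+f₀)
  obtain ⟨s20, s1_20, eq1⟩ := step1
  obtain ⟨s02, e02⟩ := P.summable_comm hcom s20  -- Summable f₀ f₂, f₀+f₂ = f₂+f₀
  rw [← e02] at s1_20 eq1
  obtain ⟨s02_1, e02_1⟩ := P.summable_comm hcom s1_20  -- Summable (f₀+f₂) f₁
  -- apply assoc1 to (f₂, f₀) and (f₂+f₀, f₁): need Summable (sum f₂ f₀) f₁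
  have s20_1 : P.Summable (P.sum f₂ f₀) f₁ := by rw [← e02]; exact s02_1
  have step2 := P.assoc1 hzero hcom hwit s20 s20_1
  -- Summable f₀ f₁, Summable f₂ (f₀+f₁), (f₂+f₀)+f₁ = f₂+(f₀+f₁)
  obtain ⟨s01, s2_01, eq2⟩ := step2
  obtain ⟨s01_2, e01_2⟩ := P.summable_comm hcom s2_01  -- Summable (f₀+f₁) f₂, (f₀+f₁)+f₂ = f₂+(f₀+f₁)
  refine ⟨s01, s01_2, ?_⟩
  -- (f₀+f₁)+f₂ = f₂+(f₀+f₁) = (f₂+f₀)+f₁ = (f₀+f₂)+f₁ = ? 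
  -- also need step applying assoc1 to (f₀,f₂),(f₀+f₂,f₁): gives (f₀+f₂)+f₁ = f₀+(f₂+f₁)
  have step3 := P.assoc1 hzero hcom hwit s02 s02_1
  obtain ⟨s21, _, eq3⟩ := step3  -- (f₀+f₂)+f₁ = f₀+(f₂+f₁)
  have e21 : P.sum f₂ f₁ = P.sum f₁ f₂ := (P.summable_comm hcom h12).2
  rw [e01_2, ← eq2, ← e02, eq3, e21]

lemma addOpt_pos {X Y : C} {f g : X ⟶ Y} (h : P.Summable f g) :
    P.addOpt f g = some (P.sum f g) := by rw [addOpt, dif_pos h]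

lemma addOpt_neg {X Y : C} {f g : X ⟶ Y} (h : ¬ P.Summable f g) :
    P.addOpt f g = none := by rw [addOpt, dif_neg h]

lemma addOpt_some {X Y : C} {f g s : X ⟶ Y} (h : P.addOpt f g = some s) :
    P.Summable f g ∧ P.sum f g = s := by
  by_cases hs : P.Summable f g
  · rw [P.addOpt_pos hs] at h
    exact ⟨hs, Option.some_injective _ h⟩
  · rw [P.addOpt_neg hs] at h
    exact absurd h (by simp)

lemma foldl_step_none {X Y : C} (l : List (X ⟶ Y)) :
    l.foldl (fun acc a => acc.bind fun s => P.addOpt s a) none = none := by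
  induction l with
  | nil => rfl
  | cons x l ih => simpa using ih

lemma foldl_shift (hzero : P.SZero) (hcom : P.SCom) (hwit : P.SWit)
    {X Y : C} (l : List (X ⟶ Y)) : ∀ a : X ⟶ Y,
    l.foldl (fun acc a => acc.bind fun s => P.addOpt s a) (some a)
      = (P.sumListHom l).bind (fun t => P.addOpt a t) := by
  induction l with
  | nil =>
    intro a
    rw [sumListHom]
    simp only [List.foldl_nil, Option.bind_some]
    rw [P.addOpt_pos (P.summable_zero_right hzero hcom a).1,
      (P.summable_zero_right hzero hcom a).2]
  | cons x l ih =>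
    intro a
    have hsx : P.sumListHom (x :: l)
        = l.foldl (fun acc a => acc.bind fun s => P.addOpt s a) (some x) := by
      rw [sumListHom, List.foldl_cons]
      simp only [Option.bind_some]
      rw [P.addOpt_pos (P.summable_zero_left hzero x).1, (P.summable_zero_left hzero x).2]
    rw [List.foldl_cons]
    simp only [Option.bind_some]
    rw [hsx, ih x]
    by_cases hax : P.Summable a x
    · rw [P.addOpt_pos hax, ih (P.sum a x)]
      cases hl : P.sumListHom l with
      | none => simp
      | some t =>
        simp only [Option.bind_some]
        by_cases hxt : P.Summable x t
        · rw [P.addOpt_pos hxt]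
          simp only [Option.bind_some]
          by_cases hat : P.Summable a (P.sum x t)
          · obtain ⟨_, saxt, eq⟩ := P.assoc2 hzero hcom hwit hxt hat
            rw [P.addOpt_pos saxt, P.addOpt_pos hat, eq]
          · have hn : ¬ P.Summable (P.sum a x) t := fun hs =>
              hat (P.assoc1 hzero hcom hwit hax hs).2.1
            rw [P.addOpt_neg hn, P.addOpt_neg hat]
        · have hn : ¬ P.Summable (P.sum a x) t := fun hs =>
            hxt (P.assoc1 hzero hcom hwit hax hs).1
          rw [P.addOpt_neg hn, P.addOpt_neg hxt]
          simp
    · rw [P.addOpt_neg hax, P.foldl_step_none]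
      cases hl : P.sumListHom l with
      | none => simp
      | some t =>
        simp only [Option.bind_some]
        by_cases hxt : P.Summable x t
        · rw [P.addOpt_pos hxt]
          simp only [Option.bind_some]
          have hn : ¬ P.Summable a (P.sum x t) := fun hs =>
            hax (P.assoc2 hzero hcom hwit hxt hs).1
          rw [P.addOpt_neg hn]
        · rw [P.addOpt_neg hxt]
          simp

lemma sumListHom_cons (hzero : P.SZero) (hcom : P.SCom) (hwit : P.SWit)
    {X Y : C} (x : X ⟶ Y) (l : List (X ⟶ Y)) :
    P.sumListHom (x :: l) = (P.sumListHom l).bind (fun t => P.addOpt x t) := by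
  rw [sumListHom, List.foldl_cons]
  simp only [Option.bind_some]
  rw [P.addOpt_pos (P.summable_zero_left hzero x).1, (P.summable_zero_left hzero x).2]
  exact P.foldl_shift hzero hcom hwit l x

lemma sumListHom_append (hzero : P.SZero) (hcom : P.SCom) (hwit : P.SWit)
    {X Y : C} (l₁ l₂ : List (X ⟶ Y)) {a : X ⟶ Y} (h : P.sumListHom l₁ = some a) :
    P.sumListHom (l₁ ++ l₂) = (P.sumListHom l₂).bind (fun t => P.addOpt a t) := by
  rw [sumListHom, List.foldl_append, ← sumListHom, h]
  exact P.foldl_shift hzero hcom hwit l₂ a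

end PreSummability
namespace PreSummability

variable {C : Type u} [Category.{v} C] [HasZeroMorphisms C] [MonoidalCategory C]
  [SymmetricCategory C] (P : PreSummability C)

lemma stens_left (htens : P.STens) {U V X Y : C} (f : X ⟶ Y) {g₀ g₁ : U ⟶ V}
    (h : P.Summable g₀ g₁) :
    P.Summable (f ⊗ₘ g₀) (f ⊗ₘ g₁) ∧ (f ⊗ₘ P.sum g₀ g₁) = P.sum (f ⊗ₘ g₀) (f ⊗ₘ g₁) := by
  obtain ⟨hs, he⟩ := htens g₀ g₁ f h
  have key : ∀ g : U ⟶ V, f ⊗ₘ g = (β_ X U).hom ≫ (g ⊗ₘ f) ≫ (β_ V Y).hom := by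
    intro g
    rw [← BraidedCategory.braiding_naturality_assoc f g]
    simp
  have h1 := P.summable_postcomp ((β_ V Y).hom) hs
  have h2 := P.summable_precomp ((β_ X U).hom) h1.1
  constructor
  · rw [key g₀, key g₁]
    exact h2.1
  · rw [key (P.sum g₀ g₁), key g₀, key g₁, h2.2, h1.2, he]

omit [SymmetricCategory C] in
lemma sumListHom_tensor_right (htz : TensorZero C) (hzero : P.SZero) (hcom : P.SCom)
    (hwit : P.SWit) (htens : P.STens) {X Y U V : C} (g : U ⟶ V) :
    ∀ (l : List (X ⟶ Y)) (s : X ⟶ Y), P.sumListHom l = some s →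
      P.sumListHom (l.map (fun f => f ⊗ₘ g)) = some (s ⊗ₘ g) := by
  intro l
  induction l with
  | nil =>
    intro s hs
    rw [sumListHom] at hs
    simp only [List.foldl_nil, Option.some.injEq] at hs
    subst hs
    rw [List.map_nil, sumListHom, List.foldl_nil, (htz g).1]
  | cons x l ih =>
    intro s hs
    rw [P.sumListHom_cons hzero hcom hwit] at hs
    cases hl : P.sumListHom l with
    | none => rw [hl] at hs; simp at hs
    | some t =>
      rw [hl] at hs
      simp only [Option.bind_some] at hs
      obtain ⟨hxt, hsum⟩ := P.addOpt_some hs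
      rw [List.map_cons, P.sumListHom_cons hzero hcom hwit, ih t hl]
      simp only [Option.bind_some]
      rw [P.addOpt_pos (htens x t g hxt).1, ← (htens x t g hxt).2, hsum]

lemma sumListHom_tensor_left (htz : TensorZero C) (hzero : P.SZero) (hcom : P.SCom)
    (hwit : P.SWit) (htens : P.STens) {X Y U V : C} (f : X ⟶ Y) :
    ∀ (l : List (U ⟶ V)) (s : U ⟶ V), P.sumListHom l = some s →
      P.sumListHom (l.map (fun g => f ⊗ₘ g)) = some (f ⊗ₘ s) := by
  intro l
  induction l with
  | nil =>
    intro s hs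
    rw [sumListHom] at hs
    simp only [List.foldl_nil, Option.some.injEq] at hs
    subst hs
    rw [List.map_nil, sumListHom, List.foldl_nil, (htz f).2]
  | cons x l ih =>
    intro s hs
    rw [P.sumListHom_cons hzero hcom hwit] at hs
    cases hl : P.sumListHom l with
    | none => rw [hl] at hs; simp at hs
    | some t =>
      rw [hl] at hs
      simp only [Option.bind_some] at hs
      obtain ⟨hxt, hsum⟩ := P.addOpt_some hs
      rw [List.map_cons, P.sumListHom_cons hzero hcom hwit, ih t hl]
      simp only [Option.bind_some]
      rw [P.addOpt_pos (P.stens_left htens f hxt).1, ← (P.stens_left htens f hxt).2, hsum]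

end PreSummability
theorem stmt15 {C : Type u} [Category.{v} C] [HasZeroMorphisms C]
    [MonoidalCategory C] [SymmetricCategory C] (htz : TensorZero C)
    (P : PreSummability C) (hcom : P.SCom) (hzero : P.SZero) (hwit : P.SWit)
    (htens : P.STens)
    {X Y U V : C} (lf : List (X ⟶ Y)) (lg : List (U ⟶ V))
    (sf : X ⟶ Y) (sg : U ⟶ V)
    (hf : P.sumListHom lf = some sf) (hg : P.sumListHom lg = some sg) :
    P.sumListHom (lf.flatMap fun f => lg.map fun g => (f ⊗ₘ g)) = some (sf ⊗ₘ sg) := by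
  induction lf generalizing sf with
  | nil =>
    rw [PreSummability.sumListHom] at hf
    simp only [List.foldl_nil, Option.some.injEq] at hf
    subst hf
    rw [List.flatMap_nil, PreSummability.sumListHom, List.foldl_nil, (htz sg).1]
  | cons f lf ih =>
    rw [P.sumListHom_cons hzero hcom hwit] at hf
    cases hl : P.sumListHom lf with
    | none => rw [hl] at hf; simp at hf
    | some t =>
      rw [hl] at hf
      simp only [Option.bind_some] at hf
      obtain ⟨hft, hsum⟩ := P.addOpt_some hf
      rw [List.flatMap_cons,
        P.sumListHom_append hzero hcom hwit _ _
          (P.sumListHom_tensor_left htz hzero hcom hwit htens f lg sg hg),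
        ih t hl]
      simp only [Option.bind_some]
      rw [P.addOpt_pos (htens f t sg hft).1, ← (htens f t sg hft).2, hsum]
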